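/- Let q \in (0,1), n, p \in \mathbb{N} with 1 \le p \le n, \beta \in \mathbb{R}, let \psi : \mathbb{N} \to (0,\infty) satisfy \varepsilon := \sup_{k \ge n-p+1} |\psi(k+1)/\psi(k) - q| < (1-q)/2, and let \tau_{n,p}(k) = 1 - (n-k)/p for n-p+1 \le k \le n-1, \tau_{n,p}(k) = 1 for k \ge n. Then for every t \in \mathbb{R}, |\sum_{k=n-p+2}^{\infty} \tau_{n,p}(k) (\psi(k)/\psi(n-p+1) - q^{k-(n-p+1)}) \cos(kt - \beta\pi/2)| \le 8\varepsilon/(p(1-q)^3). -/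

import Mathlib

private lemma gsum_aux (x : ℝ) (hx0 : 0 ≤ x) (hx1 : x < 1) :
    HasSum (fun j : ℕ => ((j : ℝ) + 2) * x ^ (j + 1)) (1 / (1 - x) ^ 2 - 1) := by
  have hx : ‖x‖ < 1 := by rwa [Real.norm_eq_abs, abs_of_nonneg hx0]
  have h1 : HasSum (fun j : ℕ => (j : ℝ) * x ^ j) (x / (1 - x) ^ 2) :=
    hasSum_coe_mul_geometric_of_norm_lt_one hx
  have h2 : HasSum (fun j : ℕ => x ^ j) (1 - x)⁻¹ := hasSum_geometric_of_lt_one hx0 hx1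
  have h3 := (h1.mul_left x).add ((h2.mul_left (2 * x)))
  have heq : (fun j : ℕ => x * ((j : ℝ) * x ^ j) + 2 * x * x ^ j)
      = fun j : ℕ => ((j : ℝ) + 2) * x ^ (j + 1) := by
    funext j; ring
  rw [heq] at h3
  convert h3 using 1
  · rfl
  have h1x : (1 : ℝ) - x ≠ 0 := by intro h; nlinarith
  field_simp
  ring

theorem remainder_bound_with_p (q : ℝ) (hq0 : 0 < q) (hq1 : q < 1)
    (n p : ℕ) (hp : 1 ≤ p) (hpn : p ≤ n) (β : ℝ)
    (ψ : ℕ → ℝ) (hψ : ∀ k, 0 < ψ k) (ε : ℝ)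
    (hsup : IsLUB {x : ℝ | ∃ k, n - p + 1 ≤ k ∧ x = |ψ (k + 1) / ψ k - q|} ε)
    (hε : ε < (1 - q) / 2) (τ : ℕ → ℝ)
    (hτ1 : ∀ k, n - p + 1 ≤ k → k ≤ n - 1 → τ k = 1 - ((n : ℝ) - k) / p)
    (hτ2 : ∀ k, n ≤ k → τ k = 1) :
    ∀ t : ℝ,
      |∑' j : ℕ, τ (n - p + 2 + j) *
          (ψ (n - p + 2 + j) / ψ (n - p + 1) - q ^ (j + 1)) *
          Real.cos ((n - p + 2 + j : ℕ) * t - β * Real.pi / 2)| ≤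
        8 * ε / (p * (1 - q) ^ 3) := by
  intro t
  have hp0 : (0 : ℝ) < p := by exact_mod_cast hp
  have hub : ∀ k, n - p + 1 ≤ k → |ψ (k + 1) / ψ k - q| ≤ ε := by
    intro k hk
    exact hsup.1 ⟨k, hk, rfl⟩
  have hε0 : 0 ≤ ε := le_trans (abs_nonneg _) (hub (n - p + 1) le_rfl)
  set r := q + ε with hr
  have hrq : q ≤ r := by simp only [hr]; linarith
  have hr1 : r < 1 := by simp only [hr]; linarith
  have h1r : (1 - q) / 2 < 1 - r := by simp only [hr]; linarith
  have h1r0 : (0 : ℝ) < 1 - r := by linarith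
  have h1q0 : (0 : ℝ) < 1 - q := by linarith
  -- key ratio product bound
  have hP : ∀ j : ℕ, |ψ (n - p + 2 + j) / ψ (n - p + 1) - q ^ (j + 1)|
      ≤ r ^ (j + 1) - q ^ (j + 1) := by
    intro j
    induction j with
    | zero =>
      have h0 := hub (n - p + 1) le_rfl
      have he : n - p + 1 + 1 = n - p + 2 + 0 := by omega
      rw [he] at h0
      have hrr : r ^ (0 + 1) - q ^ (0 + 1) = ε := by simp only [hr]; ring
      rw [hrr, pow_one]
      exact h0
    | succ j ih =>
      have hK : n - p + 2 + (j + 1) = (n - p + 2 + j) + 1 := by omega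
      rw [hK]
      set K := n - p + 2 + j with hKdef
      have hρ := hub K (by omega)
      have hρpos : 0 < ψ (K + 1) / ψ K := div_pos (hψ _) (hψ _)
      have hρr : ψ (K + 1) / ψ K ≤ r := by
        have := abs_le.1 hρ
        simp only [hr]; linarith [this.2]
      have hne1 : ψ K ≠ 0 := (hψ K).ne'
      have hne2 : ψ (n - p + 1) ≠ 0 := (hψ (n - p + 1)).ne'
      have hsplit : ψ (K + 1) / ψ (n - p + 1)
          = (ψ (K + 1) / ψ K) * (ψ K / ψ (n - p + 1)) := by
        field_simp
      set ρ := ψ (K + 1) / ψ K with hρdef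
      set P := ψ K / ψ (n - p + 1) with hPdef
      have hqpow : (0 : ℝ) ≤ q ^ (j + 1) := by positivity
      have hrqpow : (0 : ℝ) ≤ r ^ (j + 1) - q ^ (j + 1) := by
        have := pow_le_pow_left₀ hq0.le hrq (j + 1)
        linarith
      have hm1 : |P - q ^ (j + 1)| * ρ ≤ (r ^ (j + 1) - q ^ (j + 1)) * r :=
        mul_le_mul ih hρr hρpos.le hrqpow
      have hm2 : q ^ (j + 1) * |ρ - q| ≤ q ^ (j + 1) * ε :=
        mul_le_mul_of_nonneg_left hρ hqpow
      calc |ψ (K + 1) / ψ (n - p + 1) - q ^ (j + 1 + 1)|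
          = |(P - q ^ (j + 1)) * ρ + q ^ (j + 1) * (ρ - q)| := by
            rw [hsplit]; ring_nf
        _ ≤ |(P - q ^ (j + 1)) * ρ| + |q ^ (j + 1) * (ρ - q)| := abs_add_le _ _
        _ = |P - q ^ (j + 1)| * ρ + q ^ (j + 1) * |ρ - q| := by
            rw [abs_mul, abs_mul, abs_of_pos hρpos, abs_of_nonneg hqpow]
        _ ≤ (r ^ (j + 1) - q ^ (j + 1)) * r + q ^ (j + 1) * ε := by linarith
        _ = r ^ (j + 1 + 1) - q ^ (j + 1 + 1) := by
            simp only [hr]; ring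
  -- τ bound
  have hτ : ∀ j : ℕ, 0 ≤ τ (n - p + 2 + j) ∧ τ (n - p + 2 + j) ≤ ((j : ℝ) + 2) / p := by
    intro j
    rcases le_or_gt (n - p + 2 + j) (n - 1) with h | h
    · have hτv := hτ1 (n - p + 2 + j) (by omega) h
      have hcast : ((n - p + 2 + j : ℕ) : ℝ) = (n : ℝ) - p + 2 + j := by
        push_cast [Nat.cast_sub hpn]; ring
      rw [hτv, hcast]
      have hX : (n : ℝ) - ((n : ℝ) - p + 2 + j) = (p : ℝ) - 2 - j := by ring
      rw [hX]
      have hj0 : (0 : ℝ) ≤ j := Nat.cast_nonneg j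
      constructor
      · rw [sub_nonneg, div_le_one hp0]; linarith
      · apply le_of_eq
        field_simp
        ring
    · have hn : n ≤ n - p + 2 + j := by omega
      rw [hτ2 _ hn]
      have hjp : (p : ℝ) ≤ (j : ℝ) + 2 := by
        have : p ≤ j + 2 := by omega
        exact_mod_cast this
      refine ⟨zero_le_one, ?_⟩
      rw [le_div_iff₀ hp0]; linarith
  -- summable bound sequence
  have hgr := gsum_aux r (by linarith) hr1
  have hgq := gsum_aux q hq0.le hq1
  have hb : HasSum (fun j : ℕ => (((j : ℝ) + 2) * r ^ (j + 1) - ((j : ℝ) + 2) * q ^ (j + 1)) / p)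
      ((1 / (1 - r) ^ 2 - 1 - (1 / (1 - q) ^ 2 - 1)) / p) := (hgr.sub hgq).div_const p
  have hbsumm : Summable (fun j : ℕ => (((j : ℝ) + 2) * r ^ (j + 1) - ((j : ℝ) + 2) * q ^ (j + 1)) / p) :=
    hb.summable
  set a : ℕ → ℝ := fun j => τ (n - p + 2 + j) *
      (ψ (n - p + 2 + j) / ψ (n - p + 1) - q ^ (j + 1)) *
      Real.cos ((n - p + 2 + j : ℕ) * t - β * Real.pi / 2) with ha
  have hbound : ∀ j, |a j| ≤ (((j : ℝ) + 2) * r ^ (j + 1) - ((j : ℝ) + 2) * q ^ (j + 1)) / p := by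
    intro j
    have h1 := (hτ j).1
    have h2 := (hτ j).2
    have h3 := hP j
    have h4 : |Real.cos ((n - p + 2 + j : ℕ) * t - β * Real.pi / 2)| ≤ 1 := Real.abs_cos_le_one _
    have hrqpow : (0 : ℝ) ≤ r ^ (j + 1) - q ^ (j + 1) := by
      have := pow_le_pow_left₀ hq0.le hrq (j + 1)
      linarith
    have hA : |τ (n - p + 2 + j)| ≤ ((j : ℝ) + 2) / p := by rwa [abs_of_nonneg h1]
    have hm1 : |τ (n - p + 2 + j)| * |ψ (n - p + 2 + j) / ψ (n - p + 1) - q ^ (j + 1)|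
        ≤ (((j : ℝ) + 2) / p) * (r ^ (j + 1) - q ^ (j + 1)) :=
      mul_le_mul hA h3 (abs_nonneg _) (by positivity)
    have hm2 : |τ (n - p + 2 + j)| * |ψ (n - p + 2 + j) / ψ (n - p + 1) - q ^ (j + 1)|
        * |Real.cos ((n - p + 2 + j : ℕ) * t - β * Real.pi / 2)|
        ≤ (((j : ℝ) + 2) / p) * (r ^ (j + 1) - q ^ (j + 1)) * 1 :=
      mul_le_mul hm1 h4 (abs_nonneg _)
        (mul_nonneg (by positivity) hrqpow)
    calc |a j| = |τ (n - p + 2 + j)| * |ψ (n - p + 2 + j) / ψ (n - p + 1) - q ^ (j + 1)|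
          * |Real.cos ((n - p + 2 + j : ℕ) * t - β * Real.pi / 2)| := by
          rw [ha]; simp [abs_mul]
      _ ≤ (((j : ℝ) + 2) / p) * (r ^ (j + 1) - q ^ (j + 1)) * 1 := hm2
      _ = (((j : ℝ) + 2) * r ^ (j + 1) - ((j : ℝ) + 2) * q ^ (j + 1)) / p := by ring
  have habs : Summable (fun j => |a j|) :=
    Summable.of_nonneg_of_le (fun j => abs_nonneg _) hbound hbsumm
  have key : |∑' j : ℕ, a j| ≤ (1 / (1 - r) ^ 2 - 1 / (1 - q) ^ 2) / p := by
    calc |∑' j : ℕ, a j| ≤ ∑' j : ℕ, |a j| := by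
          simpa [Real.norm_eq_abs] using
            norm_tsum_le_tsum_norm (f := a) (by simpa [Real.norm_eq_abs] using habs)
      _ ≤ ∑' j : ℕ, (((j : ℝ) + 2) * r ^ (j + 1) - ((j : ℝ) + 2) * q ^ (j + 1)) / p :=
          Summable.tsum_le_tsum hbound habs hbsumm
      _ = (1 / (1 - r) ^ 2 - 1 - (1 / (1 - q) ^ 2 - 1)) / p := hb.tsum_eq
      _ = (1 / (1 - r) ^ 2 - 1 / (1 - q) ^ 2) / p := by ring
  refine key.trans ?_
  rw [div_le_div_iff₀ hp0 (by positivity)]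
  have h1 : 1 / (1 - r) ^ 2 - 1 / (1 - q) ^ 2 ≤ 8 * ε / (1 - q) ^ 3 := by
    rw [div_sub_div _ _ (by positivity) (by positivity),
      div_le_div_iff₀ (by positivity) (by positivity)]
    have h2 : 1 - q < 2 * (1 - r) := by linarith
    have e1 : (1 - q) ^ 2 ≤ 4 * (1 - r) ^ 2 := by nlinarith
    have e2 : (1 - q) ^ 2 - (1 - r) ^ 2 ≤ 2 * ε * (1 - q) := by
      have : r - q = ε := by simp only [hr]; ring
      nlinarith
    nlinarith [mul_nonneg hε0 (sq_nonneg (1 - q)), mul_pos (mul_pos h1q0 h1q0) h1q0,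
      mul_le_mul_of_nonneg_left e1 hε0]
  calc (1 / (1 - r) ^ 2 - 1 / (1 - q) ^ 2) * ((p : ℝ) * (1 - q) ^ 3)
      ≤ (8 * ε / (1 - q) ^ 3) * ((p : ℝ) * (1 - q) ^ 3) := by
        apply mul_le_mul_of_nonneg_right h1 (by positivity)
    _ = 8 * ε * p := by field_simp
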